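/- Let I be a subgroup instance over a coset template admitting a (k, k+1)-anomaly h for some k ≥ 2. Fix a ∈ dom(h), let h̄ be a solution of I with h̄(a) = h(a) (which exists since h restricted to {a} extends to a solution), and define h'(x) = h(x)·h̄(x)⁻¹ on dom(h). Then the restriction of h' to dom(h)\{a} is a (k-1, k)-anomaly of the instance I' obtained from I by adding the unary constraint forcing a to the identity. In particular, if some subgroup instance admits a (k, k+1)-anomaly with k ≥ 2, then some subgroup instance admits a (k-1, k)-anomaly. -/
import Mathlib


section CosetCSP

variable {ι : Type} {G : ι → Type} [∀ x, Group (G x)]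
variable {C : Type}

/-- A solution of a subgroup instance over a coset template: an assignment of a
group element to every instance element, satisfying every constraint (each
constraint requires the tuple of values at `v c` to lie in the subgroup `K c`). -/
def CosetSol (nar : C → ℕ) (v : ∀ c, Fin (nar c) → ι)
    (K : ∀ c, Subgroup (∀ i, G (v c i))) (g : ∀ x, G x) : Prop :=
  ∀ c, (fun i => g (v c i)) ∈ K c

/-- A partial solution with domain `D`: satisfies every constraint whose
elements all lie in `D`. -/
def CosetPartialSol (nar : C → ℕ) (v : ∀ c, Fin (nar c) → ι)
    (K : ∀ c, Subgroup (∀ i, G (v c i))) (D : Finset ι) (h : ∀ x, G x) : Prop :=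
  ∀ c, (∀ i, v c i ∈ D) → (fun i => h (v c i)) ∈ K c

/-- The partial solution with domain `D` extends to a solution. -/
def CosetExtends (nar : C → ℕ) (v : ∀ c, Fin (nar c) → ι)
    (K : ∀ c, Subgroup (∀ i, G (v c i))) (D : Finset ι) (h : ∀ x, G x) : Prop :=
  ∃ g : ∀ x, G x, CosetSol nar v K g ∧ ∀ x ∈ D, g x = h x

/-- A `(k, j)`-anomaly of the subgroup instance. -/
def CosetAnomaly (nar : C → ℕ) (v : ∀ c, Fin (nar c) → ι)
    (K : ∀ c, Subgroup (∀ i, G (v c i))) (k j : ℕ) (D : Finset ι) (h : ∀ x, G x) : Prop :=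
  CosetPartialSol nar v K D h ∧ D.card = j ∧ ¬ CosetExtends nar v K D h ∧
    ∀ X ⊆ D, X.card = k → CosetExtends nar v K X h

/-- Solutions of the instance `I'` obtained by adding the unary constraint
`1(a)` forcing `a` to the identity. -/
def CosetSol' (nar : C → ℕ) (v : ∀ c, Fin (nar c) → ι)
    (K : ∀ c, Subgroup (∀ i, G (v c i))) (a : ι) (g : ∀ x, G x) : Prop :=
  CosetSol nar v K g ∧ g a = 1

/-- Partial solutions of the instance `I'`. -/
def CosetPartialSol' (nar : C → ℕ) (v : ∀ c, Fin (nar c) → ι)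
    (K : ∀ c, Subgroup (∀ i, G (v c i))) (a : ι) (D : Finset ι) (h : ∀ x, G x) : Prop :=
  CosetPartialSol nar v K D h ∧ (a ∈ D → h a = 1)

/-- Extension to a solution, for the instance `I'`. -/
def CosetExtends' (nar : C → ℕ) (v : ∀ c, Fin (nar c) → ι)
    (K : ∀ c, Subgroup (∀ i, G (v c i))) (a : ι) (D : Finset ι) (h : ∀ x, G x) : Prop :=
  ∃ g : ∀ x, G x, CosetSol' nar v K a g ∧ ∀ x ∈ D, g x = h x

/-- A `(k, j)`-anomaly of the instance `I'`. -/
def CosetAnomaly' (nar : C → ℕ) (v : ∀ c, Fin (nar c) → ι)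
    (K : ∀ c, Subgroup (∀ i, G (v c i))) (a : ι) (k j : ℕ) (D : Finset ι)
    (h : ∀ x, G x) : Prop :=
  CosetPartialSol' nar v K a D h ∧ D.card = j ∧ ¬ CosetExtends' nar v K a D h ∧
    ∀ X ⊆ D, X.card = k → CosetExtends' nar v K a X h

end CosetCSP

/-- Lemma: from a `(k, k+1)`-anomaly `h` of a subgroup instance (`k ≥ 2`),
choosing `a ∈ dom h` and a solution `h̄` with `h̄ a = h a`, the map
`h' x = h x * (h̄ x)⁻¹` restricted to `dom h \ {a}` is a `(k-1, k)`-anomaly of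
the subgroup instance `I'` obtained by adding the constraint `1(a)`. -/
theorem anomaly_descent
    {ι : Type} [DecidableEq ι] [Finite ι] {G : ι → Type}
    [∀ x, Group (G x)] [∀ x, Finite (G x)]
    {C : Type} (nar : C → ℕ) (v : ∀ c, Fin (nar c) → ι)
    (K : ∀ c, Subgroup (∀ i, G (v c i)))
    (k : ℕ) (hk : 2 ≤ k) (D : Finset ι) (h : ∀ x, G x)
    (hanom : CosetAnomaly nar v K k (k + 1) D h)
    (a : ι) (ha : a ∈ D)
    (hbar : ∀ x, G x) (hbarSol : CosetSol nar v K hbar) (hbara : hbar a = h a) :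
    CosetAnomaly' nar v K a (k - 1) k (D.erase a) (fun x => h x * (hbar x)⁻¹) := by
  obtain ⟨hps, hcard, hnext, hext⟩ := hanom
  refine ⟨⟨?_, ?_⟩, ?_, ?_, ?_⟩
  · intro c hc
    have h1 : (fun i => h (v c i)) ∈ K c := hps c (fun i => Finset.mem_of_mem_erase (hc i))
    have h2 : (fun i => hbar (v c i)) ∈ K c := hbarSol c
    exact mul_mem h1 (inv_mem h2)
  · intro haa
    exact absurd haa (Finset.notMem_erase a D)
  · rw [Finset.card_erase_of_mem ha, hcard]; omega
  · rintro ⟨g, ⟨gsol, ga⟩, hg⟩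
    apply hnext
    refine ⟨fun x => g x * hbar x, fun c => mul_mem (gsol c) (hbarSol c), ?_⟩
    intro x hx
    by_cases hxa : x = a
    · subst hxa; simp [ga, hbara]
    · have := hg x (Finset.mem_erase.mpr ⟨hxa, hx⟩)
      show g x * hbar x = h x
      rw [this]; group
  · intro X hX hXcard
    have haX : a ∉ X := fun hax => Finset.notMem_erase a D (hX hax)
    have hsub : insert a X ⊆ D := by
      intro x hx
      rcases Finset.mem_insert.mp hx with rfl | hx
      · exact ha
      · exact Finset.mem_of_mem_erase (hX hx)
    have hcard' : (insert a X).card = k := by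
      rw [Finset.card_insert_of_notMem haX, hXcard]; omega
    obtain ⟨g, gsol, hg⟩ := hext (insert a X) hsub hcard'
    refine ⟨fun x => g x * (hbar x)⁻¹,
      ⟨fun c => mul_mem (gsol c) (inv_mem (hbarSol c)), ?_⟩, ?_⟩
    · show g a * (hbar a)⁻¹ = 1
      rw [hg a (Finset.mem_insert_self a X), hbara]; group
    · intro x hx
      show g x * (hbar x)⁻¹ = h x * (hbar x)⁻¹
      rw [hg x (Finset.mem_insert_of_mem hx)]
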